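/- Suppose v_0 = v*. Under Oja's update rule with η ≤ 0.1 / max_{i∈[n]} ‖y_i‖₂², for any two time steps 0 ≤ a < b ≤ n, one has ‖P v̂_b − P v̂_a‖₂² ≤ 50 · α · log(‖v_b‖₂ / ‖v_a‖₂). -/

import Mathlib

open RealInnerProductSpace


private lemma oja_aux1 (D A s T av L : ℝ) (hA0 : 0 ≤ A) (hA2 : A ^ 2 = av / 2)
    (hs0 : 0 ≤ s) (hs2 : s ^ 2 = T) (hT1 : T ≤ 1) (hTL : T ≤ 1.21 * L)
    (hav : 0 < av) (hL0 : 0 ≤ L) (hD0 : 0 ≤ D)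
    (hmain : D ≤ 1.05 * A * T + s * (Real.sqrt 2 * A)) : D ^ 2 ≤ 50 * av * L := by
  subst hs2
  have hsqrt2 : Real.sqrt 2 ≤ 1.5 := by
    nlinarith [Real.sq_sqrt (by norm_num : (0:ℝ) ≤ 2), Real.sqrt_nonneg 2]
  have hs1 : s ≤ 1 := by nlinarith
  have hss : s ^ 2 ≤ s := by nlinarith
  have hD : D ≤ 2.55 * A * s := by
    have h1 : A * s ^ 2 ≤ A * s := mul_le_mul_of_nonneg_left hss hA0
    have h2 : s * (Real.sqrt 2 * A) ≤ 1.5 * A * s := by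
      nlinarith [Real.sqrt_nonneg 2, mul_nonneg hA0 hs0]
    nlinarith [h1, h2]
  have hD2 : D ^ 2 ≤ (2.55 * A * s) ^ 2 := pow_le_pow_left₀ hD0 hD 2
  have hAs : A ^ 2 * s ^ 2 = av / 2 * s ^ 2 := by rw [hA2]
  have hαT : av * s ^ 2 ≤ av * (1.21 * L) := mul_le_mul_of_nonneg_left hTL hav.le
  have hαL0 : 0 ≤ av * L := mul_nonneg hav.le hL0
  nlinarith [hD2, hAs, hαT, hαL0]

private lemma oja_aux2 (D A T av L : ℝ) (hA2 : A ^ 2 = av / 2) (hT1 : 1 < T)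
    (hTL : T ≤ 1.21 * L) (hav : 0 < av) (hD0 : 0 ≤ D) (hend : D ≤ 2 * A) :
    D ^ 2 ≤ 50 * av * L := by
  have hD2 : D ^ 2 ≤ (2 * A) ^ 2 := pow_le_pow_left₀ hD0 hend 2
  have hαL : av * 1 ≤ av * (1.21 * L) := mul_le_mul_of_nonneg_left (by linarith) hav.le
  nlinarith [hD2, hA2, hαL]

set_option maxHeartbeats 2000000 in
theorem stmt_10 {n d : ℕ} (hn : 1 ≤ n) (hd : 1 ≤ d)
    (y : ℕ → EuclideanSpace ℝ (Fin d)) (η : ℝ) (hη : 0 < η)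
    (hη' : η ≤ 0.1 / ((Finset.Icc 1 n).sup' (Finset.nonempty_Icc.mpr hn)
      fun i => ‖y i‖ ^ 2))
    (vstar : EuclideanSpace ℝ (Fin d)) (hvstar : ‖vstar‖ = 1)
    (α : ℝ) (hα : 0 < α)
    (halpha : ∀ w : EuclideanSpace ℝ (Fin d), ‖w‖ ≤ 1 → ⟪w, vstar⟫ = 0 →
      η * ∑ i ∈ Finset.Icc 1 n, ⟪w, y i⟫ ^ 2 ≤ α)
    (P : EuclideanSpace ℝ (Fin d) → EuclideanSpace ℝ (Fin d))
    (hP : ∀ x, P x = x - ⟪vstar, x⟫ • vstar)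
    (v : ℕ → EuclideanSpace ℝ (Fin d)) (hv0 : v 0 = vstar)
    (hv : ∀ i, 1 ≤ i → i ≤ n → v i = v (i - 1) + (η * ⟪y i, v (i - 1)⟫) • y i)
    (a b : ℕ) (hab : a < b) (hbn : b ≤ n) :
    ‖P (‖v b‖⁻¹ • v b) - P (‖v a‖⁻¹ • v a)‖ ^ 2 ≤
      50 * α * Real.log (‖v b‖ / ‖v a‖) := by
  -- the max of the squared norms
  set M := ((Finset.Icc 1 n).sup' (Finset.nonempty_Icc.mpr hn) fun i => ‖y i‖ ^ 2) with hM
  have hMpos : 0 < M := by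
    by_contra h
    push_neg at h
    have : (0.1 : ℝ) / M ≤ 0 := div_nonpos_iff.mpr (Or.inl ⟨by norm_num, h⟩)
    linarith
  have hηM : η * M ≤ 0.1 := by
    have := (le_div_iff₀ hMpos).mp hη'
    linarith
  have hyb : ∀ i, 1 ≤ i → i ≤ n → η * ‖y i‖ ^ 2 ≤ 0.1 := by
    intro i h1 h2
    have hmem : i ∈ Finset.Icc 1 n := Finset.mem_Icc.mpr ⟨h1, h2⟩
    have hle : ‖y i‖ ^ 2 ≤ M := Finset.le_sup' (f := fun i => ‖y i‖ ^ 2) hmem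
    nlinarith
  -- squared norm recursion
  have hsq : ∀ i, 1 ≤ i → i ≤ n →
      ‖v i‖ ^ 2 = ‖v (i - 1)‖ ^ 2 + (2 * η + η ^ 2 * ‖y i‖ ^ 2) * ⟪y i, v (i - 1)⟫ ^ 2 := by
    intro i h1 h2
    rw [hv i h1 h2, norm_add_sq_real, real_inner_smul_right, norm_smul, Real.norm_eq_abs,
      mul_pow, sq_abs, real_inner_comm (v (i - 1)) (y i)]
    ring
  have hin : ∀ i, 1 ≤ i → i ≤ n → ⟪y i, v (i - 1)⟫ ^ 2 ≤ ‖y i‖ ^ 2 * ‖v (i - 1)‖ ^ 2 := by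
    intro i _ _
    have h := abs_real_inner_le_norm (y i) (v (i - 1))
    have h2 : |⟪y i, v (i - 1)⟫| ^ 2 ≤ (‖y i‖ * ‖v (i - 1)‖) ^ 2 :=
      pow_le_pow_left₀ (abs_nonneg _) h 2
    rw [sq_abs] at h2
    nlinarith
  have hmono : ∀ i, 1 ≤ i → i ≤ n → ‖v (i - 1)‖ ≤ ‖v i‖ := by
    intro i h1 h2
    have h := hsq i h1 h2
    nlinarith [norm_nonneg (v i), norm_nonneg (v (i - 1)), sq_nonneg ⟪y i, v (i - 1)⟫,
      sq_nonneg (‖y i‖ * η * ⟪y i, v (i - 1)⟫)]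
  have hge1 : ∀ m, m ≤ n → (1 : ℝ) ≤ ‖v m‖ := by
    intro m
    induction m with
    | zero => intro _; rw [hv0, hvstar]
    | succ m ih =>
      intro hmn
      have h1 := hmono (m + 1) (by omega) hmn
      simp only [Nat.add_sub_cancel] at h1
      exact le_trans (ih (by omega)) h1
  have hmono2 : ∀ p q : ℕ, p ≤ q → q ≤ n → ‖v p‖ ≤ ‖v q‖ := by
    intro p q hpq hqn
    induction q with
    | zero => have : p = 0 := by omega
              simp [this]
    | succ q ih =>
      rcases Nat.eq_or_lt_of_le hpq with h | h
      · rw [h]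
      · have h1 := hmono (q + 1) (by omega) hqn
        simp only [Nat.add_sub_cancel] at h1
        exact le_trans (ih (by omega) (by omega)) h1
  have hNpos : ∀ m, m ≤ n → (0 : ℝ) < ‖v m‖ := fun m hm => lt_of_lt_of_le one_pos (hge1 m hm)
  -- inner product expansion
  have hinner_sum : ∀ w : EuclideanSpace ℝ (Fin d), ⟪w, vstar⟫ = 0 → ∀ m, m ≤ n →
      ⟪w, v m⟫ = ∑ i ∈ Finset.Icc 1 m, η * ⟪y i, v (i - 1)⟫ * ⟪w, y i⟫ := by
    intro w hw m
    induction m with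
    | zero => intro _; simp [hv0, hw]
    | succ m ih =>
      intro hmn
      rw [Finset.sum_Icc_succ_top (by omega : 1 ≤ m + 1), ← ih (by omega),
        hv (m + 1) (by omega) hmn]
      simp only [Nat.add_sub_cancel, inner_add_right, real_inner_smul_right]
  have hsum_beta : ∀ m, m ≤ n →
      ∑ i ∈ Finset.Icc 1 m, η * ⟪y i, v (i - 1)⟫ ^ 2 ≤ (‖v m‖ ^ 2 - 1) / 2 := by
    intro m
    induction m with
    | zero => intro _; simp [hv0, hvstar]
    | succ m ih =>
      intro hmn
      rw [Finset.sum_Icc_succ_top (by omega : 1 ≤ m + 1)]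
      simp only [Nat.add_sub_cancel]
      have h1 := hsq (m + 1) (by omega) hmn
      simp only [Nat.add_sub_cancel] at h1
      have h2 := ih (by omega)
      nlinarith [sq_nonneg ⟪y (m + 1), v m⟫, sq_nonneg (‖y (m + 1)‖ * η * ⟪y (m + 1), v m⟫)]
  -- angle bound
  have hang : ∀ w : EuclideanSpace ℝ (Fin d), ‖w‖ ≤ 1 → ⟪w, vstar⟫ = 0 → ∀ m, m ≤ n →
      ⟪w, v m⟫ ^ 2 ≤ α / 2 * ‖v m‖ ^ 2 := by
    intro w hw1 hw0 m hmn
    rw [hinner_sum w hw0 m hmn]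
    have hcs := Finset.sum_mul_sq_le_sq_mul_sq (Finset.Icc 1 m)
      (fun i => Real.sqrt η * ⟪y i, v (i - 1)⟫) (fun i => Real.sqrt η * ⟪w, y i⟫)
    have he1 : ∀ i ∈ Finset.Icc 1 m,
        (Real.sqrt η * ⟪y i, v (i - 1)⟫) * (Real.sqrt η * ⟪w, y i⟫)
          = η * ⟪y i, v (i - 1)⟫ * ⟪w, y i⟫ := by
      intro i _
      rw [show Real.sqrt η * ⟪y i, v (i - 1)⟫ * (Real.sqrt η * ⟪w, y i⟫)
        = (Real.sqrt η * Real.sqrt η) * ⟪y i, v (i - 1)⟫ * ⟪w, y i⟫ by ring,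
        Real.mul_self_sqrt hη.le]
    have he2 : ∀ i ∈ Finset.Icc 1 m,
        (Real.sqrt η * ⟪y i, v (i - 1)⟫) ^ 2 = η * ⟪y i, v (i - 1)⟫ ^ 2 := by
      intro i _; rw [mul_pow, Real.sq_sqrt hη.le]
    have he3 : ∀ i ∈ Finset.Icc 1 m,
        (Real.sqrt η * ⟪w, y i⟫) ^ 2 = η * ⟪w, y i⟫ ^ 2 := by
      intro i _; rw [mul_pow, Real.sq_sqrt hη.le]
    rw [Finset.sum_congr rfl he1, Finset.sum_congr rfl he2, Finset.sum_congr rfl he3] at hcs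
    have hg : ∑ i ∈ Finset.Icc 1 m, η * ⟪w, y i⟫ ^ 2 ≤ α := by
      calc ∑ i ∈ Finset.Icc 1 m, η * ⟪w, y i⟫ ^ 2
          ≤ ∑ i ∈ Finset.Icc 1 n, η * ⟪w, y i⟫ ^ 2 := by
            apply Finset.sum_le_sum_of_subset_of_nonneg
              (Finset.Icc_subset_Icc le_rfl hmn)
            intro i _ _
            positivity
        _ = η * ∑ i ∈ Finset.Icc 1 n, ⟪w, y i⟫ ^ 2 := by rw [Finset.mul_sum]
        _ ≤ α := halpha w hw1 hw0
    have hb := hsum_beta m hmn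
    have hb0 : (0 : ℝ) ≤ ∑ i ∈ Finset.Icc 1 m, η * ⟪y i, v (i - 1)⟫ ^ 2 := by
      apply Finset.sum_nonneg; intro i _; positivity
    have hg0 : (0 : ℝ) ≤ ∑ i ∈ Finset.Icc 1 m, η * ⟪w, y i⟫ ^ 2 := by
      apply Finset.sum_nonneg; intro i _; positivity
    nlinarith [hge1 m hmn]
  set A := Real.sqrt (α / 2) with hA
  have hA0 : 0 ≤ A := Real.sqrt_nonneg _
  have hA2 : A ^ 2 = α / 2 := Real.sq_sqrt (by positivity)
  have hwu : ∀ w : EuclideanSpace ℝ (Fin d), ‖w‖ ≤ 1 → ⟪w, vstar⟫ = 0 → ∀ m, m ≤ n →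
      |⟪w, ‖v m‖⁻¹ • v m⟫| ≤ A := by
    intro w hw1 hw0 m hm
    have h := hang w hw1 hw0 m hm
    have hp := hNpos m hm
    have hx : ⟪w, ‖v m‖⁻¹ • v m⟫ = ‖v m‖⁻¹ * ⟪w, v m⟫ := real_inner_smul_right _ _ _
    have hinv : ‖v m‖⁻¹ * ‖v m‖ = 1 := inv_mul_cancel₀ hp.ne'
    have hx2 : ⟪w, ‖v m‖⁻¹ • v m⟫ ^ 2 ≤ α / 2 := by
      rw [hx]
      have h3 : (‖v m‖⁻¹) ^ 2 * ⟪w, v m⟫ ^ 2 ≤ (‖v m‖⁻¹) ^ 2 * (α / 2 * ‖v m‖ ^ 2) :=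
        mul_le_mul_of_nonneg_left h (sq_nonneg _)
      calc (‖v m‖⁻¹ * ⟪w, v m⟫) ^ 2 = (‖v m‖⁻¹) ^ 2 * ⟪w, v m⟫ ^ 2 := by ring
        _ ≤ (‖v m‖⁻¹) ^ 2 * (α / 2 * ‖v m‖ ^ 2) := h3
        _ = α / 2 * (‖v m‖⁻¹ * ‖v m‖) ^ 2 := by ring
        _ = α / 2 := by rw [hinv]; ring
    rw [← Real.sqrt_sq_eq_abs]
    exact Real.sqrt_le_sqrt hx2
  -- per step movement bound
  have hstep_move : ∀ w : EuclideanSpace ℝ (Fin d), ‖w‖ ≤ 1 → ⟪w, vstar⟫ = 0 →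
      ∀ i, 1 ≤ i → i ≤ n →
      |⟪w, ‖v i‖⁻¹ • v i⟫ - ⟪w, ‖v (i - 1)‖⁻¹ • v (i - 1)⟫| ≤
        1.05 * A * (η * (⟪y i, v (i - 1)⟫ / ‖v (i - 1)‖) ^ 2)
          + η * |⟪y i, v (i - 1)⟫ / ‖v (i - 1)‖| * |⟪w, y i⟫| := by
    intro w hw1 hw0 i h1 h2
    have hp : (0 : ℝ) < ‖v (i - 1)‖ := hNpos (i - 1) (by omega)
    have hr : (0 : ℝ) < ‖v i‖ := hNpos i h2
    have hpr : ‖v (i - 1)‖ ≤ ‖v i‖ := hmono i h1 h2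
    have e1 : ⟪w, v i⟫ = ⟪w, v (i - 1)⟫ + η * ⟪y i, v (i - 1)⟫ * ⟪w, y i⟫ := by
      rw [hv i h1 h2]
      simp only [inner_add_right, real_inner_smul_right]
    have e2 : ⟪w, ‖v i‖⁻¹ • v i⟫ = ‖v i‖⁻¹ * ⟪w, v i⟫ := real_inner_smul_right _ _ _
    have e3 : ⟪w, ‖v (i - 1)‖⁻¹ • v (i - 1)⟫ = ‖v (i - 1)‖⁻¹ * ⟪w, v (i - 1)⟫ :=
      real_inner_smul_right _ _ _
    have scalar_id : ∀ X t γ Pn Rn : ℝ, Pn ≠ 0 → Rn ≠ 0 →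
        Rn⁻¹ * (X + η * t * γ) - Pn⁻¹ * X
          = (Pn⁻¹ * X) * (Pn / Rn - 1) + η * (t / Pn) * γ * (Pn / Rn) := by
      intro X t γ Pn Rn hPn hRn
      field_simp
      ring
    have heq : ⟪w, ‖v i‖⁻¹ • v i⟫ - ⟪w, ‖v (i - 1)‖⁻¹ • v (i - 1)⟫
        = (‖v (i - 1)‖⁻¹ * ⟪w, v (i - 1)⟫) * (‖v (i - 1)‖ / ‖v i‖ - 1)
          + η * (⟪y i, v (i - 1)⟫ / ‖v (i - 1)‖) * ⟪w, y i⟫ * (‖v (i - 1)‖ / ‖v i‖) := by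
      rw [e2, e3, e1]
      exact scalar_id _ _ _ _ _ hp.ne' hr.ne'
    have hq1 : ‖v (i - 1)‖ / ‖v i‖ ≤ 1 := (div_le_one hr).mpr hpr
    have hq0 : 0 < ‖v (i - 1)‖ / ‖v i‖ := div_pos hp hr
    have hW : |‖v (i - 1)‖⁻¹ * ⟪w, v (i - 1)⟫| ≤ A := by
      have h := hwu w hw1 hw0 (i - 1) (by omega)
      rwa [e3] at h
    -- the ratio bound
    have hr2 := hsq i h1 h2
    have hY := hyb i h1 h2
    have hY0 : (0 : ℝ) ≤ ‖y i‖ ^ 2 := sq_nonneg _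
    have hpoly : (‖v i‖ - ‖v (i - 1)‖) * ‖v (i - 1)‖ ^ 2
        ≤ (1.05 * η * ⟪y i, v (i - 1)⟫ ^ 2) * ‖v i‖ := by
      nlinarith [sq_nonneg ⟪y i, v (i - 1)⟫, mul_nonneg (sub_nonneg.mpr hpr) hp.le,
        mul_le_mul_of_nonneg_right hY (mul_nonneg hη.le (sq_nonneg ⟪y i, v (i - 1)⟫)),
        mul_nonneg (mul_nonneg (sub_nonneg.mpr hpr) hp.le) (sub_nonneg.mpr hpr)]
    have hratio : 1 - ‖v (i - 1)‖ / ‖v i‖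
        ≤ 1.05 * (η * (⟪y i, v (i - 1)⟫ / ‖v (i - 1)‖) ^ 2) := by
      have e4 : 1 - ‖v (i - 1)‖ / ‖v i‖ = (‖v i‖ - ‖v (i - 1)‖) / ‖v i‖ := by
        rw [sub_div, div_self hr.ne']
      rw [e4]
      have e5 : 1.05 * (η * (⟪y i, v (i - 1)⟫ / ‖v (i - 1)‖) ^ 2)
          = (1.05 * η * ⟪y i, v (i - 1)⟫ ^ 2) / ‖v (i - 1)‖ ^ 2 := by
        rw [div_pow, mul_div_assoc]
        ring
      rw [e5, div_le_div_iff₀ hr (by positivity)]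
      linarith [hpoly]
    rw [heq]
    have hT1 : |(‖v (i - 1)‖⁻¹ * ⟪w, v (i - 1)⟫) * (‖v (i - 1)‖ / ‖v i‖ - 1)|
        ≤ 1.05 * A * (η * (⟪y i, v (i - 1)⟫ / ‖v (i - 1)‖) ^ 2) := by
      rw [abs_mul, abs_of_nonpos (by linarith : ‖v (i - 1)‖ / ‖v i‖ - 1 ≤ 0),
        show -(‖v (i - 1)‖ / ‖v i‖ - 1) = 1 - ‖v (i - 1)‖ / ‖v i‖ by ring]
      calc |‖v (i - 1)‖⁻¹ * ⟪w, v (i - 1)⟫| * (1 - ‖v (i - 1)‖ / ‖v i‖)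
          ≤ A * (1.05 * (η * (⟪y i, v (i - 1)⟫ / ‖v (i - 1)‖) ^ 2)) :=
            mul_le_mul hW hratio (by linarith) hA0
        _ = 1.05 * A * (η * (⟪y i, v (i - 1)⟫ / ‖v (i - 1)‖) ^ 2) := by ring
    have hT2 : |η * (⟪y i, v (i - 1)⟫ / ‖v (i - 1)‖) * ⟪w, y i⟫ * (‖v (i - 1)‖ / ‖v i‖)|
        ≤ η * |⟪y i, v (i - 1)⟫ / ‖v (i - 1)‖| * |⟪w, y i⟫| := by
      rw [abs_mul, abs_mul, abs_mul, abs_of_nonneg hη.le, abs_of_nonneg hq0.le]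
      calc η * |⟪y i, v (i - 1)⟫ / ‖v (i - 1)‖| * |⟪w, y i⟫| * (‖v (i - 1)‖ / ‖v i‖)
          ≤ η * |⟪y i, v (i - 1)⟫ / ‖v (i - 1)‖| * |⟪w, y i⟫| * 1 := by gcongr
        _ = η * |⟪y i, v (i - 1)⟫ / ‖v (i - 1)‖| * |⟪w, y i⟫| := mul_one _
    calc |(‖v (i - 1)‖⁻¹ * ⟪w, v (i - 1)⟫) * (‖v (i - 1)‖ / ‖v i‖ - 1)
          + η * (⟪y i, v (i - 1)⟫ / ‖v (i - 1)‖) * ⟪w, y i⟫ * (‖v (i - 1)‖ / ‖v i‖)|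
        ≤ |(‖v (i - 1)‖⁻¹ * ⟪w, v (i - 1)⟫) * (‖v (i - 1)‖ / ‖v i‖ - 1)|
          + |η * (⟪y i, v (i - 1)⟫ / ‖v (i - 1)‖) * ⟪w, y i⟫ * (‖v (i - 1)‖ / ‖v i‖)| :=
          abs_add_le _ _
      _ ≤ 1.05 * A * (η * (⟪y i, v (i - 1)⟫ / ‖v (i - 1)‖) ^ 2)
          + η * |⟪y i, v (i - 1)⟫ / ‖v (i - 1)‖| * |⟪w, y i⟫| := add_le_add hT1 hT2
  -- per step log growth bound
  have hlog_step : ∀ i, 1 ≤ i → i ≤ n →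
      η * (⟪y i, v (i - 1)⟫ / ‖v (i - 1)‖) ^ 2 ≤ 1.21 * Real.log (‖v i‖ / ‖v (i - 1)‖) := by
    intro i h1 h2
    have hp : (0 : ℝ) < ‖v (i - 1)‖ := hNpos (i - 1) (by omega)
    have hr : (0 : ℝ) < ‖v i‖ := hNpos i h2
    have hr2 := hsq i h1 h2
    have hY := hyb i h1 h2
    have hY0 : (0 : ℝ) ≤ ‖y i‖ ^ 2 := sq_nonneg _
    obtain ⟨q, hq⟩ : ∃ q : ℝ, q = (⟪y i, v (i - 1)⟫ / ‖v (i - 1)‖) ^ 2 := ⟨_, rfl⟩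
    rw [← hq]
    have hq0 : 0 ≤ q := hq ▸ sq_nonneg _
    have hβ2 : q ≤ ‖y i‖ ^ 2 := by
      rw [hq, div_pow, div_le_iff₀ (by positivity)]
      exact hin i h1 h2
    have hηβ : η * q ≤ 0.1 := by nlinarith
    obtain ⟨c, hc⟩ : ∃ c : ℝ, c = (2 * η + η ^ 2 * ‖y i‖ ^ 2) * q := ⟨_, rfl⟩
    have hc0 : 0 ≤ c := by
      rw [hc]; positivity
    have hc1 : 2 * (η * q) ≤ c := by
      rw [hc]
      nlinarith [mul_nonneg (mul_nonneg (sq_nonneg η) hY0) hq0]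
    have hc2 : c ≤ 0.21 := by
      rw [hc]
      nlinarith [mul_le_mul hY hηβ (by positivity) (by norm_num)]
    have hrp2 : (‖v i‖ / ‖v (i - 1)‖) ^ 2 = 1 + c := by
      rw [hc, hq, div_pow, div_pow, div_eq_iff (by positivity), hr2]
      field_simp
    have hlog1 : 1 - (1 + c)⁻¹ ≤ Real.log (1 + c) :=
      Real.one_sub_inv_le_log_of_pos (by linarith)
    have hlogr : Real.log (1 + c) = 2 * Real.log (‖v i‖ / ‖v (i - 1)‖) := by
      rw [← hrp2, Real.log_pow]
      norm_num
    have hinvc : 1 - (1 + c)⁻¹ = c / (1 + c) := by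
      field_simp
      ring
    have h5 : 2 * (η * q) ≤ 1.21 * (c / (1 + c)) := by
      rw [mul_div_assoc', le_div_iff₀ (by linarith : (0:ℝ) < 1 + c)]
      nlinarith [mul_le_mul_of_nonneg_right hc1 (by linarith : (0:ℝ) ≤ 1 + c),
        mul_le_mul_of_nonneg_right hc2 hc0]
    linarith
  -- telescoping the logarithm
  have htel : ∀ m, a ≤ m → m ≤ n →
      Real.log (‖v m‖ / ‖v a‖)
        = ∑ i ∈ Finset.Icc (a + 1) m, Real.log (‖v i‖ / ‖v (i - 1)‖) := by
    intro m hm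
    induction m, hm using Nat.le_induction with
    | base =>
      intro _
      rw [Finset.Icc_eq_empty (by omega), Finset.sum_empty,
        div_self (hNpos a (by omega)).ne', Real.log_one]
    | succ m hm ih =>
      intro hmn
      rw [Finset.sum_Icc_succ_top (by omega : a + 1 ≤ m + 1), ← ih (by omega)]
      simp only [Nat.add_sub_cancel]
      rw [Real.log_div (hNpos (m + 1) hmn).ne' (hNpos a (by omega)).ne',
        Real.log_div (hNpos m (by omega)).ne' (hNpos a (by omega)).ne',
        Real.log_div (hNpos (m + 1) hmn).ne' (hNpos m (by omega)).ne']
      ring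
  -- window quantities
  set T := ∑ i ∈ Finset.Icc (a + 1) b, η * (⟪y i, v (i - 1)⟫ / ‖v (i - 1)‖) ^ 2 with hT
  set L := Real.log (‖v b‖ / ‖v a‖) with hL
  have hT0 : 0 ≤ T := Finset.sum_nonneg fun i _ => by positivity
  have hL0 : 0 ≤ L :=
    Real.log_nonneg ((one_le_div (hNpos a (by omega))).mpr (hmono2 a b (by omega) hbn))
  have hTL : T ≤ 1.21 * L := by
    rw [hL, htel b (by omega) hbn, Finset.mul_sum, hT]
    apply Finset.sum_le_sum
    intro i hi
    have hi' := Finset.mem_Icc.mp hi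
    exact hlog_step i (by omega) (by omega)
  have hαL0 : 0 ≤ α * L := mul_nonneg hα.le hL0
  -- degenerate case
  rcases eq_or_ne (P (‖v b‖⁻¹ • v b) - P (‖v a‖⁻¹ • v a)) 0 with hE | hE
  · rw [hE, norm_zero]
    have : (0:ℝ) ^ 2 = 0 := by norm_num
    rw [this]
    linarith [hαL0]
  set E := P (‖v b‖⁻¹ • v b) - P (‖v a‖⁻¹ • v a) with hEdef
  have hEn : 0 < ‖E‖ := by
    rw [hEdef]
    exact norm_pos_iff.mpr hE
  set w := ‖E‖⁻¹ • E with hwdef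
  have hwn : ‖w‖ = 1 := by
    rw [hwdef, norm_smul, norm_inv, norm_norm, inv_mul_cancel₀ hEn.ne']
  have hw1 : ‖w‖ ≤ 1 := hwn.le
  have hPv : ∀ x, ⟪vstar, P x⟫ = 0 := by
    intro x
    rw [hP x, inner_sub_right, real_inner_smul_right, real_inner_self_eq_norm_sq, hvstar]
    ring
  have hw0 : ⟪w, vstar⟫ = 0 := by
    rw [hwdef, real_inner_smul_left, hEdef, inner_sub_left,
      real_inner_comm vstar (P (‖v b‖⁻¹ • v b)), real_inner_comm vstar (P (‖v a‖⁻¹ • v a)),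
      hPv, hPv]
    ring
  have hwP : ∀ x, ⟪w, P x⟫ = ⟪w, x⟫ := by
    intro x
    rw [hP x, inner_sub_right, real_inner_smul_right, hw0]
    ring
  have hDE : ‖E‖ = ⟪w, ‖v b‖⁻¹ • v b⟫ - ⟪w, ‖v a‖⁻¹ • v a⟫ := by
    have h1 : ⟪w, E⟫ = ‖E‖ := by
      rw [hwdef, real_inner_smul_left, real_inner_self_eq_norm_sq, sq, ← mul_assoc,
        inv_mul_cancel₀ hEn.ne', one_mul]
    rw [← h1, hEdef, inner_sub_right, hwP, hwP]
  -- movement telescoping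
  have hmov : ∀ m, a ≤ m → m ≤ b →
      |⟪w, ‖v m‖⁻¹ • v m⟫ - ⟪w, ‖v a‖⁻¹ • v a⟫|
        ≤ ∑ i ∈ Finset.Icc (a + 1) m,
            (1.05 * A * (η * (⟪y i, v (i - 1)⟫ / ‖v (i - 1)‖) ^ 2)
              + η * |⟪y i, v (i - 1)⟫ / ‖v (i - 1)‖| * |⟪w, y i⟫|) := by
    intro m hm
    induction m, hm using Nat.le_induction with
    | base =>
      intro _
      rw [Finset.Icc_eq_empty (by omega), Finset.sum_empty, sub_self, abs_zero]
    | succ m hm ih =>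
      intro hmb
      rw [Finset.sum_Icc_succ_top (by omega : a + 1 ≤ m + 1)]
      simp only [Nat.add_sub_cancel]
      have hstep := hstep_move w hw1 hw0 (m + 1) (by omega) (by omega)
      simp only [Nat.add_sub_cancel] at hstep
      have hih := ih (by omega)
      have htri := abs_sub_le ⟪w, ‖v (m + 1)‖⁻¹ • v (m + 1)⟫ ⟪w, ‖v m‖⁻¹ • v m⟫
        ⟪w, ‖v a‖⁻¹ • v a⟫
      linarith
  -- Cauchy-Schwarz for the cross sum
  set S2 := ∑ i ∈ Finset.Icc (a + 1) b,
      η * |⟪y i, v (i - 1)⟫ / ‖v (i - 1)‖| * |⟪w, y i⟫| with hS2def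
  have hS20 : 0 ≤ S2 := Finset.sum_nonneg fun i _ => by positivity
  have hγ : ∑ i ∈ Finset.Icc (a + 1) b, η * ⟪w, y i⟫ ^ 2 ≤ α := by
    calc ∑ i ∈ Finset.Icc (a + 1) b, η * ⟪w, y i⟫ ^ 2
        ≤ ∑ i ∈ Finset.Icc 1 n, η * ⟪w, y i⟫ ^ 2 :=
          Finset.sum_le_sum_of_subset_of_nonneg (Finset.Icc_subset_Icc (by omega) hbn)
            (fun i _ _ => by positivity)
      _ = η * ∑ i ∈ Finset.Icc 1 n, ⟪w, y i⟫ ^ 2 := by rw [Finset.mul_sum]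
      _ ≤ α := halpha w hw1 hw0
  have hcs : S2 ^ 2 ≤ T * α := by
    have h := Finset.sum_mul_sq_le_sq_mul_sq (Finset.Icc (a + 1) b)
      (fun i => Real.sqrt η * |⟪y i, v (i - 1)⟫ / ‖v (i - 1)‖|)
      (fun i => Real.sqrt η * |⟪w, y i⟫|)
    have he1 : ∀ i ∈ Finset.Icc (a + 1) b,
        (Real.sqrt η * |⟪y i, v (i - 1)⟫ / ‖v (i - 1)‖|) * (Real.sqrt η * |⟪w, y i⟫|)
          = η * |⟪y i, v (i - 1)⟫ / ‖v (i - 1)‖| * |⟪w, y i⟫| := by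
      intro i _
      rw [show (Real.sqrt η * |⟪y i, v (i - 1)⟫ / ‖v (i - 1)‖|) * (Real.sqrt η * |⟪w, y i⟫|)
        = (Real.sqrt η * Real.sqrt η) * |⟪y i, v (i - 1)⟫ / ‖v (i - 1)‖| * |⟪w, y i⟫| by ring,
        Real.mul_self_sqrt hη.le]
    have he2 : ∀ i ∈ Finset.Icc (a + 1) b,
        (Real.sqrt η * |⟪y i, v (i - 1)⟫ / ‖v (i - 1)‖|) ^ 2
          = η * (⟪y i, v (i - 1)⟫ / ‖v (i - 1)‖) ^ 2 := by
      intro i _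
      rw [mul_pow, Real.sq_sqrt hη.le, sq_abs]
    have he3 : ∀ i ∈ Finset.Icc (a + 1) b,
        (Real.sqrt η * |⟪w, y i⟫|) ^ 2 = η * ⟪w, y i⟫ ^ 2 := by
      intro i _
      rw [mul_pow, Real.sq_sqrt hη.le, sq_abs]
    rw [Finset.sum_congr rfl he1, Finset.sum_congr rfl he2, Finset.sum_congr rfl he3] at h
    rw [hS2def, hT]
    refine le_trans h ?_
    exact mul_le_mul_of_nonneg_left hγ (Finset.sum_nonneg fun i _ => by positivity)
  have hS2sqrt : S2 ≤ Real.sqrt (T * α) := by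
    calc S2 = Real.sqrt (S2 ^ 2) := (Real.sqrt_sq hS20).symm
      _ ≤ Real.sqrt (T * α) := Real.sqrt_le_sqrt hcs
  -- two bounds on ‖E‖
  have hub := hwu w hw1 hw0 b hbn
  have hua := hwu w hw1 hw0 a (by omega)
  have hendpt : ‖E‖ ≤ 2 * A := by
    rw [hDE]
    linarith [le_abs_self ⟪w, ‖v b‖⁻¹ • v b⟫, neg_abs_le ⟪w, ‖v a‖⁻¹ • v a⟫]
  have hmain : ‖E‖ ≤ 1.05 * A * T + Real.sqrt (T * α) := by
    calc ‖E‖ = ⟪w, ‖v b‖⁻¹ • v b⟫ - ⟪w, ‖v a‖⁻¹ • v a⟫ := hDE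
      _ ≤ |⟪w, ‖v b‖⁻¹ • v b⟫ - ⟪w, ‖v a‖⁻¹ • v a⟫| := le_abs_self _
      _ ≤ ∑ i ∈ Finset.Icc (a + 1) b,
            (1.05 * A * (η * (⟪y i, v (i - 1)⟫ / ‖v (i - 1)‖) ^ 2)
              + η * |⟪y i, v (i - 1)⟫ / ‖v (i - 1)‖| * |⟪w, y i⟫|) := hmov b (by omega) le_rfl
      _ = 1.05 * A * T + S2 := by rw [Finset.sum_add_distrib, hT, hS2def, Finset.mul_sum]
      _ ≤ 1.05 * A * T + Real.sqrt (T * α) := by linarith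
  -- numeric endgame
  have hsqrtTα : Real.sqrt (T * α) = Real.sqrt T * Real.sqrt α := Real.sqrt_mul hT0 α
  set s := Real.sqrt T with hs
  have hs0 : 0 ≤ s := Real.sqrt_nonneg _
  have hs2 : s ^ 2 = T := Real.sq_sqrt hT0
  have hsa : Real.sqrt α = Real.sqrt 2 * A := by
    rw [hA, ← Real.sqrt_mul (by norm_num : (0:ℝ) ≤ 2)]
    congr 1
    ring
  have hsqrt2 : Real.sqrt 2 ≤ 1.5 := by
    nlinarith [Real.sq_sqrt (by norm_num : (0:ℝ) ≤ 2), Real.sqrt_nonneg 2]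
  rcases le_or_gt T 1 with hT1 | hT1
  · refine oja_aux1 ‖E‖ A s T α L hA0 hA2 hs0 hs2 hT1 hTL hα hL0 (norm_nonneg E) ?_
    rw [hsqrtTα, hsa] at hmain
    linarith [hmain]
  · exact oja_aux2 ‖E‖ A T α L hA2 hT1 hTL hα (norm_nonneg E) hendpt
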